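/- Let f, g : S → E be strictly increasing functions from a set S of epsilon numbers into the epsilon numbers such that f ≤ g pointwise, and let D = {e ∈ S : f(e) < g(e)}. Then for every ordinal x with Ep(x) ⊆ S and Ep(x) ∩ D ≠ ∅, one has x[f] < x[g]. -/

import Mathlib

open Ordinal

/-- An ordinal is an epsilon number if it is a fixed point of `ω ^ ·`. -/
def IsEpsilon (x : Ordinal.{0}) : Prop := ω ^ x = x

theorem cnf_fst_lt {x : Ordinal.{0}} (h : ¬ ω ^ x = x) {p : Ordinal × Ordinal}
    (hp : p ∈ CNF ω x) : p.1 < x := by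
  have hx : x ≠ 0 := by
    rintro rfl
    simp [Ordinal.CNF.zero_right] at hp
  have h1 : p.1 ≤ Ordinal.log ω x := Ordinal.CNF.fst_le_log hp
  have h2 : Ordinal.log ω x < x := by
    rcases lt_or_eq_of_le (Ordinal.log_le_self ω x) with h' | h'
    · exact h'
    · exfalso
      have hle := Ordinal.opow_log_le_self ω hx
      rw [h'] at hle
      exact h (le_antisymm hle (Ordinal.right_le_opow x one_lt_omega0))
  exact lt_of_le_of_lt h1 h2

open scoped Classical in
/-- The set of epsilon numbers occurring hereditarily in the Cantor normal form of `x`. -/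
noncomputable def Ep (x : Ordinal.{0}) : Set Ordinal.{0} :=
  if h : ω ^ x = x then {x}
  else ⋃ p : {q // q ∈ CNF ω x}, Ep p.1.1
termination_by x
decreasing_by exact cnf_fst_lt h p.2

open scoped Classical in
/-- Simultaneous substitution of the epsilon numbers occurring hereditarily in the
Cantor normal form of `x` by their values under `f`. -/
noncomputable def subst (f : Ordinal.{0} → Ordinal.{0}) (x : Ordinal.{0}) : Ordinal.{0} :=
  if h : ω ^ x = x then f x
  else (((CNF ω x).attach).map (fun p => ω ^ subst f p.1.1 * p.1.2)).sum
termination_by x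
decreasing_by exact cnf_fst_lt h p.2

-- basic rewrites
theorem subst_eps {f x} (h : ω ^ x = x) : subst f x = f x := by rw [subst, dif_pos h]

theorem subst_ne {f x} (h : ¬ ω ^ x = x) :
    subst f x = ((CNF ω x).map (fun p => ω ^ subst f p.1 * p.2)).sum := by
  rw [subst, dif_neg h]
  exact congrArg List.sum
    (List.attach_map_val (l := CNF ω x) (f := fun p : Ordinal × Ordinal => ω ^ subst f p.1 * p.2))

theorem subst_zero (f) : subst f 0 = 0 := by
  have h : ¬ ω ^ (0:Ordinal.{0}) = 0 := by simp
  rw [subst_ne h, Ordinal.CNF.zero_right]; rfl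

theorem Ep_eps {x : Ordinal.{0}} (h : ω ^ x = x) : Ep x = {x} := by rw [Ep, dif_pos h]

theorem mem_Ep_iff {x : Ordinal.{0}} (h : ¬ ω ^ x = x) {e} :
    e ∈ Ep x ↔ ∃ p ∈ CNF ω x, e ∈ Ep p.1 := by
  rw [Ep, dif_neg h]
  constructor
  · rintro ⟨s, ⟨p, rfl⟩, hs⟩; exact ⟨p.1, p.2, hs⟩
  · rintro ⟨p, hp, he⟩; exact ⟨Ep p.1, ⟨⟨p, hp⟩, rfl⟩, he⟩

theorem log_lt_self {x : Ordinal.{0}} (h : ¬ ω ^ x = x) (hx : x ≠ 0) :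
    Ordinal.log ω x < x := by
  rcases lt_or_eq_of_le (Ordinal.log_le_self ω x) with h' | h'
  · exact h'
  · exfalso
    have hle := Ordinal.opow_log_le_self ω hx
    rw [h'] at hle
    exact h (le_antisymm hle (Ordinal.right_le_opow x one_lt_omega0))

theorem eps_ne_zero {x : Ordinal.{0}} (h : ω ^ x = x) : x ≠ 0 := by
  intro h0; rw [h0] at h; simp at h

theorem CNF_eps {x : Ordinal.{0}} (h : ω ^ x = x) : CNF ω x = [(x, 1)] := by
  have hx : x ≠ 0 := eps_ne_zero h
  have hlog : Ordinal.log ω x = x := by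
    conv_lhs => rw [← h]
    exact Ordinal.log_opow one_lt_omega0 x
  rw [Ordinal.CNF.ne_zero hx, hlog, h, Ordinal.div_self hx, Ordinal.mod_self, Ordinal.CNF.zero_right]

theorem Ep_zero : Ep 0 = ∅ := by
  have h : ¬ ω ^ (0:Ordinal.{0}) = 0 := by simp
  ext e
  simp only [mem_Ep_iff h, Ordinal.CNF.zero_right, List.not_mem_nil, false_and, exists_false,
    Set.mem_empty_iff_false, iff_false]

theorem Ep_sub_of_mem {x : Ordinal.{0}} {p : Ordinal × Ordinal} (hp : p ∈ CNF ω x) :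
    Ep p.1 ⊆ Ep x := by
  by_cases h : ω ^ x = x
  · rw [CNF_eps h] at hp
    simp at hp
    subst hp
    exact subset_rfl
  · intro e he
    exact (mem_Ep_iff h).2 ⟨p, hp, he⟩

theorem Ep_le {a e : Ordinal.{0}} (he : e ∈ Ep a) : e ≤ a := by
  induction a using Ordinal.induction with
  | h a IH =>
    by_cases h : ω ^ a = a
    · rw [Ep_eps h] at he; rw [he]
    · obtain ⟨p, hp, hep⟩ := (mem_Ep_iff h).1 he
      exact le_of_lt (lt_of_le_of_lt (IH p.1 (cnf_fst_lt h hp) hep) (cnf_fst_lt h hp))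

theorem subst_decomp {f : Ordinal.{0} → Ordinal.{0}} {x : Ordinal.{0}}
    (hx : x ≠ 0) (h : ¬ ω ^ x = x)
    (hfr : ω ^ (x % ω ^ Ordinal.log ω x) = x % ω ^ Ordinal.log ω x →
      ω ^ f (x % ω ^ Ordinal.log ω x) = f (x % ω ^ Ordinal.log ω x)) :
    subst f x = ω ^ subst f (Ordinal.log ω x) * (x / ω ^ Ordinal.log ω x)
      + subst f (x % ω ^ Ordinal.log ω x) := by
  rw [subst_ne h, Ordinal.CNF.ne_zero hx, List.map_cons, List.sum_cons]
  congr 1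
  set r := x % ω ^ Ordinal.log ω x with hr
  by_cases hre : ω ^ r = r
  · rw [CNF_eps hre]
    simp only [List.map_cons, List.map_nil, List.sum_cons, List.sum_nil, add_zero, mul_one]
    rw [subst_eps hre, hfr hre]
  · rw [subst_ne hre]

theorem Ep_log_sub {x : Ordinal.{0}} (hx : x ≠ 0) (h : ¬ ω ^ x = x) :
    Ep (Ordinal.log ω x) ⊆ Ep x := by
  apply Ep_sub_of_mem (p := (Ordinal.log ω x, x / ω ^ Ordinal.log ω x))
  rw [Ordinal.CNF.ne_zero hx]
  exact List.mem_cons_self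

theorem Ep_mod_sub {x : Ordinal.{0}} (hx : x ≠ 0) (h : ¬ ω ^ x = x) :
    Ep (x % ω ^ Ordinal.log ω x) ⊆ Ep x := by
  set r := x % ω ^ Ordinal.log ω x with hrdef
  have htail : ∀ p ∈ CNF ω r, p ∈ CNF ω x := by
    intro p hp
    rw [Ordinal.CNF.ne_zero hx, List.mem_cons]
    exact Or.inr hp
  by_cases hre : ω ^ r = r
  · have : (r, 1) ∈ CNF ω x := htail _ (by rw [CNF_eps hre]; exact List.mem_cons_self)
    exact Ep_sub_of_mem this
  · intro e he
    obtain ⟨p, hp, hep⟩ := (mem_Ep_iff hre).1 he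
    exact Ep_sub_of_mem (htail p hp) hep

theorem Ep_decomp {x : Ordinal.{0}} (hx : x ≠ 0) (h : ¬ ω ^ x = x) {e : Ordinal.{0}}
    (he : e ∈ Ep x) :
    e ∈ Ep (Ordinal.log ω x) ∨ e ∈ Ep (x % ω ^ Ordinal.log ω x) := by
  obtain ⟨p, hp, hep⟩ := (mem_Ep_iff h).1 he
  rw [Ordinal.CNF.ne_zero hx, List.mem_cons] at hp
  rcases hp with hp | hp
  · left; rw [hp] at hep; exact hep
  · right
    set r := x % ω ^ Ordinal.log ω x with hrdef
    by_cases hre : ω ^ r = r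
    · rw [CNF_eps hre] at hp
      simp at hp
      subst hp
      exact Ep_sub_of_mem (x := r) (p := (r,1)) (by rw [CNF_eps hre]; exact List.mem_cons_self) hep
    · exact (mem_Ep_iff hre).2 ⟨p, hp, hep⟩

theorem term_lt_opow {A B c : Ordinal.{0}} (hAB : A < B) (hc : c < ω) :
    ω ^ A * c < ω ^ B := by
  calc ω ^ A * c < ω ^ A * ω := by
        exact (mul_lt_mul_iff_right₀ (Ordinal.opow_pos A omega0_pos)).2 hc
    _ = ω ^ (A + 1) := by rw [Ordinal.opow_add, Ordinal.opow_one]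
    _ ≤ ω ^ B := Ordinal.opow_le_opow_right omega0_pos (by
        rwa [← Order.succ_eq_add_one, Order.succ_le_iff])

theorem add_lt_opow {B x y : Ordinal.{0}} (hx : x < ω ^ B) (hy : y < ω ^ B) :
    x + y < ω ^ B := Ordinal.principal_add_omega0_opow B hx hy

theorem hfr_aux {S : Set Ordinal.{0}} {f : Ordinal.{0} → Ordinal.{0}} {x : Ordinal.{0}}
    (hx : x ≠ 0) (h : ¬ ω ^ x = x) (hE : Ep x ⊆ S) (hfE : ∀ e ∈ S, IsEpsilon (f e)) :
    ω ^ (x % ω ^ Ordinal.log ω x) = x % ω ^ Ordinal.log ω x →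
      ω ^ f (x % ω ^ Ordinal.log ω x) = f (x % ω ^ Ordinal.log ω x) := by
  intro hre
  exact hfE _ (hE (Ep_mod_sub hx h (by rw [Ep_eps hre]; exact Set.mem_singleton _)))

theorem subst_pos {S : Set Ordinal.{0}} {f : Ordinal.{0} → Ordinal.{0}} {x : Ordinal.{0}}
    (hx : x ≠ 0) (hE : Ep x ⊆ S) (hfE : ∀ e ∈ S, IsEpsilon (f e)) :
    0 < subst f x := by
  by_cases h : ω ^ x = x
  · rw [subst_eps h]
    have : ω ^ f x = f x := hfE x (hE (by rw [Ep_eps h]; exact Set.mem_singleton _))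
    rw [← this]
    exact Ordinal.opow_pos _ omega0_pos
  · rw [subst_decomp hx h (hfr_aux hx h hE hfE)]
    have h1 : 0 < ω ^ subst f (Ordinal.log ω x) * (x / ω ^ Ordinal.log ω x) :=
      mul_pos (Ordinal.opow_pos _ omega0_pos) (Ordinal.div_opow_log_pos ω hx)
    exact lt_of_lt_of_le h1 le_self_add

/-- Upper bound: if all epsilon values are below an epsilon number `γ`, so is the subst. -/
theorem subst_lt_eps {S : Set Ordinal.{0}} {f : Ordinal.{0} → Ordinal.{0}}
    (hfE : ∀ e ∈ S, IsEpsilon (f e)) {γ : Ordinal.{0}} (hγ : ω ^ γ = γ) :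
    ∀ x : Ordinal.{0}, Ep x ⊆ S → (∀ e ∈ Ep x, f e < γ) → subst f x < γ := by
  intro x
  induction x using Ordinal.induction with
  | h x IH =>
    intro hE hlt
    by_cases h : ω ^ x = x
    · rw [subst_eps h]
      exact hlt x (by rw [Ep_eps h]; exact Set.mem_singleton _)
    · by_cases hx : x = 0
      · subst hx
        rw [subst_zero, ← hγ]
        exact Ordinal.opow_pos _ omega0_pos
      · rw [subst_decomp hx h (hfr_aux hx h hE hfE), ← hγ]
        apply add_lt_opow
        · apply term_lt_opow _ (Ordinal.div_opow_log_lt x one_lt_omega0)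
          exact IH _ (log_lt_self h hx) ((Ep_log_sub hx h).trans hE)
            (fun e he => hlt e (Ep_log_sub hx h he))
        · rw [hγ]
          exact IH _ (Ordinal.mod_opow_log_lt_self ω hx) ((Ep_mod_sub hx h).trans hE)
            (fun e he => hlt e (Ep_mod_sub hx h he))

/-- Non-strict comparison. -/
theorem subst_le_subst {S : Set Ordinal.{0}} {f g : Ordinal.{0} → Ordinal.{0}}
    (hfE : ∀ e ∈ S, IsEpsilon (f e)) (hgE : ∀ e ∈ S, IsEpsilon (g e))
    (hle : ∀ e ∈ S, f e ≤ g e) :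
    ∀ x : Ordinal.{0}, Ep x ⊆ S → subst f x ≤ subst g x := by
  intro x
  induction x using Ordinal.induction with
  | h x IH =>
    intro hE
    by_cases h : ω ^ x = x
    · rw [subst_eps h, subst_eps h]
      exact hle x (hE (by rw [Ep_eps h]; exact Set.mem_singleton _))
    · by_cases hx : x = 0
      · subst hx; rw [subst_zero, subst_zero]
      · rw [subst_decomp hx h (hfr_aux hx h hE hfE), subst_decomp hx h (hfr_aux hx h hE hgE)]
        exact add_le_add
          (mul_le_mul'
            (Ordinal.opow_le_opow_right omega0_pos
              (IH _ (log_lt_self h hx) ((Ep_log_sub hx h).trans hE)))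
            le_rfl)
          (IH _ (Ordinal.mod_opow_log_lt_self ω hx) ((Ep_mod_sub hx h).trans hE))

/-- Bound lemma: if `a < ω ^ e` then `subst f a < ω ^ subst g e`, given strict comparison
below `e`. -/
theorem subst_lt_opow_subst {S : Set Ordinal.{0}} {f g : Ordinal.{0} → Ordinal.{0}}
    (hfE : ∀ e ∈ S, IsEpsilon (f e)) {e : Ordinal.{0}}
    (hmain : ∀ a, Ep a ⊆ S → a < e → subst f a < subst g e) :
    ∀ a, Ep a ⊆ S → a < ω ^ e → subst f a < ω ^ subst g e := by
  intro a
  induction a using Ordinal.induction with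
  | h a IH =>
    intro hE hae
    by_cases hax : ω ^ a = a
    · have : a < e := (Ordinal.opow_lt_opow_iff_right one_lt_omega0).1 (by rw [hax]; exact hae)
      exact lt_of_lt_of_le (hmain a hE this) (Ordinal.right_le_opow _ one_lt_omega0)
    · by_cases ha0 : a = 0
      · subst ha0
        rw [subst_zero]
        exact Ordinal.opow_pos _ omega0_pos
      · rw [subst_decomp ha0 hax (hfr_aux ha0 hax hE hfE)]
        have hLa : Ordinal.log ω a < e := (Ordinal.opow_lt_opow_iff_right one_lt_omega0).1
          (lt_of_le_of_lt (Ordinal.opow_log_le_self ω ha0) hae)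
        apply add_lt_opow
        · exact term_lt_opow
            (hmain _ ((Ep_log_sub ha0 hax).trans hE) hLa)
            (Ordinal.div_opow_log_lt a one_lt_omega0)
        · exact IH _ (Ordinal.mod_opow_log_lt_self ω ha0)
            ((Ep_mod_sub ha0 hax).trans hE)
            (lt_trans (Ordinal.mod_opow_log_lt_self ω ha0) hae)

theorem subst_lt_subst_main (S : Set Ordinal.{0}) (hS : ∀ e ∈ S, IsEpsilon e) :
    ∀ b : Ordinal.{0}, ∀ f g : Ordinal.{0} → Ordinal.{0},
      (∀ e ∈ S, IsEpsilon (f e)) → (∀ e ∈ S, IsEpsilon (g e)) →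
      StrictMonoOn f S → StrictMonoOn g S → (∀ e ∈ S, f e ≤ g e) →
      ∀ a, Ep a ⊆ S → Ep b ⊆ S → a < b → subst f a < subst g b := by
  intro b
  induction b using Ordinal.induction with
  | h b IH =>
  intro f g hfE hgE hf hg hle a ha hb hab
  by_cases hbe : ω ^ b = b
  · -- b is an epsilon number
    rw [subst_eps hbe]
    have hbS : b ∈ S := hb (by rw [Ep_eps hbe]; exact Set.mem_singleton _)
    apply subst_lt_eps hfE (hgE b hbS) a ha
    intro e he
    have heS : e ∈ S := ha he
    calc f e ≤ g e := hle e heS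
      _ < g b := hg heS hbS (lt_of_le_of_lt (Ep_le he) hab)
  · have hb0 : b ≠ 0 := fun h0 => absurd hab (by rw [h0]; exact not_lt_zero)
    have hLb_lt : Ordinal.log ω b < b := log_lt_self hbe hb0
    have hELb : Ep (Ordinal.log ω b) ⊆ S := (Ep_log_sub hb0 hbe).trans hb
    have hErb : Ep (b % ω ^ Ordinal.log ω b) ⊆ S := (Ep_mod_sub hb0 hbe).trans hb
    have hdecg : subst g b = ω ^ subst g (Ordinal.log ω b) * (b / ω ^ Ordinal.log ω b)
        + subst g (b % ω ^ Ordinal.log ω b) := subst_decomp hb0 hbe (hfr_aux hb0 hbe hb hgE)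
    set B := subst g (Ordinal.log ω b) with hBdef
    have hcb_pos : 0 < b / ω ^ Ordinal.log ω b := Ordinal.div_opow_log_pos ω hb0
    have hBub : ω ^ B * (b / ω ^ Ordinal.log ω b) ≤ subst g b := by
      rw [hdecg]; exact le_self_add
    have hB_le : B ≤ ω ^ B * (b / ω ^ Ordinal.log ω b) :=
      le_trans (Ordinal.right_le_opow _ one_lt_omega0) (Ordinal.le_mul_left _ hcb_pos)
    by_cases hae : ω ^ a = a
    · -- a is an epsilon number
      have haS : a ∈ S := ha (by rw [Ep_eps hae]; exact Set.mem_singleton _)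
      have haLb : a ≤ Ordinal.log ω b := by
        apply (Ordinal.opow_le_iff_le_log one_lt_omega0 hb0).1
        rw [hae]; exact hab.le
      rcases lt_or_eq_of_le haLb with hlt | heq
      · have h1 : subst f a < B :=
          IH _ hLb_lt f g hfE hgE hf hg hle a ha hELb hlt
        exact lt_of_lt_of_le h1 (le_trans hB_le hBub)
      · -- a = log ω b
        have hgaB : g a = B := by rw [hBdef, ← heq, subst_eps hae]
        have hfa_le : subst f a ≤ B := by rw [subst_eps hae]; exact hgaB ▸ hle a haS
        have hstrict : B < subst g b := by
          rcases lt_or_eq_of_le (Order.one_le_iff_pos.2 hcb_pos) with hc2 | hc1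
          · calc B ≤ ω ^ B * 1 := by rw [mul_one]; exact Ordinal.right_le_opow _ one_lt_omega0
              _ < ω ^ B * (b / ω ^ Ordinal.log ω b) :=
                (mul_lt_mul_iff_right₀ (Ordinal.opow_pos _ omega0_pos)).2 hc2
              _ ≤ subst g b := hBub
          · -- cb = 1, so the remainder is nonzero
            have hrb0 : b % ω ^ Ordinal.log ω b ≠ 0 := by
              intro h0
              have := Ordinal.div_add_mod b (ω ^ Ordinal.log ω b)
              rw [h0, add_zero, ← hc1, mul_one, ← heq, hae] at this
              exact absurd hab (by rw [this]; exact lt_irrefl b)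
            have hpos : 0 < subst g (b % ω ^ Ordinal.log ω b) := subst_pos hrb0 hErb hgE
            calc B ≤ ω ^ B * (b / ω ^ Ordinal.log ω b) := hB_le
              _ < subst g b := by
                rw [hdecg]
                exact lt_add_of_pos_right _ hpos
        exact lt_of_le_of_lt hfa_le hstrict
    · by_cases ha0 : a = 0
      · subst ha0
        rw [subst_zero]
        exact subst_pos hb0 hb hgE
      · have hELa : Ep (Ordinal.log ω a) ⊆ S := (Ep_log_sub ha0 hae).trans ha
        have hEra : Ep (a % ω ^ Ordinal.log ω a) ⊆ S := (Ep_mod_sub ha0 hae).trans ha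
        have hdecf : subst f a = ω ^ subst f (Ordinal.log ω a) * (a / ω ^ Ordinal.log ω a)
            + subst f (a % ω ^ Ordinal.log ω a) := subst_decomp ha0 hae (hfr_aux ha0 hae ha hfE)
        set A := subst f (Ordinal.log ω a) with hAdef
        have hLa_le : Ordinal.log ω a ≤ Ordinal.log ω b := Ordinal.log_mono_right ω hab.le
        have hLa_lt_b : Ordinal.log ω a < b := lt_of_le_of_lt hLa_le hLb_lt
        have hra_bnd : subst f (a % ω ^ Ordinal.log ω a) < ω ^ A := by
          apply subst_lt_opow_subst (g := f) hfE
            (fun a' hA' h' => IH _ hLa_lt_b f f hfE hfE hf hf (fun e _ => le_rfl) a' hA' hELa h')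
          · exact hEra
          · exact Ordinal.mod_lt a (Ordinal.opow_ne_zero _ omega0_ne_zero)
        have hca_lt : a / ω ^ Ordinal.log ω a < ω := Ordinal.div_opow_log_lt a one_lt_omega0
        rcases lt_or_eq_of_le hLa_le with hlt | heq
        · -- log a < log b
          have hAB : A < B := IH _ hLb_lt f g hfE hgE hf hg hle _ hELa hELb hlt
          have : subst f a < ω ^ B := by
            rw [hdecf]
            exact add_lt_opow (term_lt_opow hAB hca_lt)
              (lt_of_lt_of_le hra_bnd (Ordinal.opow_le_opow_right omega0_pos hAB.le))
          exact lt_of_lt_of_le this (le_trans (Ordinal.le_mul_left _ hcb_pos) hBub)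
        · -- log a = log b
          have hA_le_B : A ≤ B := by
            rw [hAdef, hBdef, heq]
            exact subst_le_subst hfE hgE hle _ (heq ▸ hELa)
          have hca_le : a / ω ^ Ordinal.log ω a ≤ b / ω ^ Ordinal.log ω b := by
            rw [heq]
            exact Ordinal.div_le_left hab.le _
          rcases lt_or_eq_of_le hca_le with hclt | hceq
          · have h1 : subst f a < ω ^ A * (a / ω ^ Ordinal.log ω a + 1) := by
              rw [hdecf, mul_add, mul_one]
              exact (add_lt_add_iff_left _).2 hra_bnd
            have h2 : ω ^ A * (a / ω ^ Ordinal.log ω a + 1) ≤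
                ω ^ B * (b / ω ^ Ordinal.log ω b) :=
              mul_le_mul' (Ordinal.opow_le_opow_right omega0_pos hA_le_B)
                (by rwa [← Order.succ_eq_add_one, Order.succ_le_iff])
            exact lt_of_lt_of_le h1 (le_trans h2 hBub)
          · -- equal coefficients: compare remainders
            have hra_rb : a % ω ^ Ordinal.log ω a < b % ω ^ Ordinal.log ω b := by
              have hea := Ordinal.div_add_mod a (ω ^ Ordinal.log ω a)
              have heb := Ordinal.div_add_mod b (ω ^ Ordinal.log ω b)
              have : ω ^ Ordinal.log ω b * (b / ω ^ Ordinal.log ω b)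
                  + a % ω ^ Ordinal.log ω a <
                  ω ^ Ordinal.log ω b * (b / ω ^ Ordinal.log ω b)
                  + b % ω ^ Ordinal.log ω b := by
                rw [heb]
                calc ω ^ Ordinal.log ω b * (b / ω ^ Ordinal.log ω b)
                    + a % ω ^ Ordinal.log ω a
                    = ω ^ Ordinal.log ω a * (a / ω ^ Ordinal.log ω a)
                      + a % ω ^ Ordinal.log ω a := by rw [← hceq, ← heq]
                  _ = a := hea
                  _ < b := hab
              exact (add_lt_add_iff_left _).1 this
            have hrb_lt_b : b % ω ^ Ordinal.log ω b < b := Ordinal.mod_opow_log_lt_self ω hb0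
            have h3 : subst f (a % ω ^ Ordinal.log ω a) < subst g (b % ω ^ Ordinal.log ω b) :=
              IH _ hrb_lt_b f g hfE hgE hf hg hle _ hEra hErb hra_rb
            rcases lt_or_eq_of_le hA_le_B with hAB | hAB
            · have : subst f a < ω ^ B := by
                rw [hdecf]
                exact add_lt_opow (term_lt_opow hAB hca_lt)
                  (lt_of_lt_of_le hra_bnd (Ordinal.opow_le_opow_right omega0_pos hAB.le))
              exact lt_of_lt_of_le this (le_trans (Ordinal.le_mul_left _ hcb_pos) hBub)
            · rw [hdecf, hdecg, hAB, hceq]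
              exact (add_lt_add_iff_left _).2 h3

theorem stmt7 (S : Set Ordinal.{0}) (f g : Ordinal → Ordinal)
    (hS : ∀ e ∈ S, IsEpsilon e)
    (hfE : ∀ e ∈ S, IsEpsilon (f e)) (hgE : ∀ e ∈ S, IsEpsilon (g e))
    (hf : StrictMonoOn f S) (hg : StrictMonoOn g S)
    (hle : ∀ e ∈ S, f e ≤ g e)
    (x : Ordinal) (hx : Ep x ⊆ S) (hD : ∃ e ∈ Ep x, e ∈ S ∧ f e < g e) :
    subst f x < subst g x := by
  have main := subst_lt_subst_main S hS
  revert hx hD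
  induction x using Ordinal.induction with
  | h x IH =>
  intro hx hD
  obtain ⟨e, heEp, heS, hfg⟩ := hD
  by_cases h : ω ^ x = x
  · rw [subst_eps h, subst_eps h]
    have hex : e = x := by rw [Ep_eps h] at heEp; exact heEp
    rw [← hex]
    exact hfg
  · have hx0 : x ≠ 0 := by
      rintro rfl
      rw [Ep_zero] at heEp
      exact absurd heEp (Set.notMem_empty e)
    have hL_lt : Ordinal.log ω x < x := log_lt_self h hx0
    have hEL : Ep (Ordinal.log ω x) ⊆ S := (Ep_log_sub hx0 h).trans hx
    have hEr : Ep (x % ω ^ Ordinal.log ω x) ⊆ S := (Ep_mod_sub hx0 h).trans hx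
    have hdecf : subst f x = ω ^ subst f (Ordinal.log ω x) * (x / ω ^ Ordinal.log ω x)
        + subst f (x % ω ^ Ordinal.log ω x) := subst_decomp hx0 h (hfr_aux hx0 h hx hfE)
    have hdecg : subst g x = ω ^ subst g (Ordinal.log ω x) * (x / ω ^ Ordinal.log ω x)
        + subst g (x % ω ^ Ordinal.log ω x) := subst_decomp hx0 h (hfr_aux hx0 h hx hgE)
    set A := subst f (Ordinal.log ω x) with hAdef
    set B := subst g (Ordinal.log ω x) with hBdef
    have hc_pos : 0 < x / ω ^ Ordinal.log ω x := Ordinal.div_opow_log_pos ω hx0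
    have hc_lt : x / ω ^ Ordinal.log ω x < ω := Ordinal.div_opow_log_lt x one_lt_omega0
    have hr_lt : x % ω ^ Ordinal.log ω x < ω ^ Ordinal.log ω x :=
      Ordinal.mod_lt x (Ordinal.opow_ne_zero _ omega0_ne_zero)
    have hBub : ω ^ B ≤ subst g x := by
      rw [hdecg]
      exact le_trans (Ordinal.le_mul_left _ hc_pos) le_self_add
    have hraA : subst f (x % ω ^ Ordinal.log ω x) < ω ^ A :=
      subst_lt_opow_subst (g := f) hfE
        (fun a' hA' h' => main _ f f hfE hfE hf hf (fun e _ => le_rfl) a' hA' hEL h')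
        _ hEr hr_lt
    rcases Ep_decomp hx0 h heEp with heL | heR
    · -- the witness occurs in the logarithm part
      have hAB : A < B := IH _ hL_lt hEL ⟨e, heL, heS, hfg⟩
      have : subst f x < ω ^ B := by
        rw [hdecf]
        exact add_lt_opow (term_lt_opow hAB hc_lt)
          (lt_of_lt_of_le hraA (Ordinal.opow_le_opow_right omega0_pos hAB.le))
      exact lt_of_lt_of_le this hBub
    · -- the witness occurs in the remainder part
      have h3 : subst f (x % ω ^ Ordinal.log ω x) < subst g (x % ω ^ Ordinal.log ω x) :=
        IH _ (Ordinal.mod_opow_log_lt_self ω hx0) hEr ⟨e, heR, heS, hfg⟩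
      have hA_le_B : A ≤ B := subst_le_subst hfE hgE hle _ hEL
      rcases lt_or_eq_of_le hA_le_B with hAB | hAB
      · have : subst f x < ω ^ B := by
          rw [hdecf]
          exact add_lt_opow (term_lt_opow hAB hc_lt)
            (lt_of_lt_of_le hraA (Ordinal.opow_le_opow_right omega0_pos hAB.le))
        exact lt_of_lt_of_le this hBub
      · rw [hdecf, hdecg, ← hAB]
        exact (add_lt_add_iff_left _).2 h3
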